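/- If the signed radius of curvature R admits a local extremum at a point s₁ ∈ (a,b), then the evolute γ̃ is not C¹-regular at s₁: there is no neighborhood of s₁ on which γ̃ admits a C¹ reparametrization with nowhere-vanishing derivative. -/

import Mathlib

open Set Real Topology Filter
open scoped NNReal

noncomputable section

/-- The Euclidean plane. -/
abbrev Plane := EuclideanSpace ℝ (Fin 2)

/-- Rotation of a plane vector by `+π/2`. -/
def Jrot (v : Plane) : Plane := WithLp.toLp 2 ![-(v 1), v 0]

local notation "⟪" x ", " y "⟫" => @inner ℝ _ _ x y

/-- `f` is of class `C^{k,α}` on `s` : it is `C^k` there and (when `α ≠ 0`) its `k`-th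
derivative is `α`-Hölder continuous on `s`.  (`α = 0` means plain `C^k`.) -/
def IsCkAlphaOn (k : ℕ) (α : ℝ≥0) (f : ℝ → Plane) (s : Set ℝ) : Prop :=
  ContDiffOn ℝ k f s ∧ (α = 0 ∨ ∃ C : ℝ≥0, HolderOnWith C α (iteratedDeriv k f) s)

/-- The curve `f` restricted to `(u,v)` is `C^{k,α}`-regular: it admits a
reparametrization of class `C^{k,α}` whose derivative never vanishes. -/
def CkAlphaRegularOn (k : ℕ) (α : ℝ≥0) (f : ℝ → Plane) (u v : ℝ) : Prop :=
  ∃ c d : ℝ, c < d ∧ ∃ φ : ℝ → ℝ,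
    ContinuousOn φ (Set.Ioo c d) ∧ Set.BijOn φ (Set.Ioo c d) (Set.Ioo u v) ∧
    IsCkAlphaOn k α (f ∘ φ) (Set.Ioo c d) ∧
    ∀ t ∈ Set.Ioo c d, deriv (f ∘ φ) t ≠ 0

set_option linter.unusedSectionVars false
set_option linter.unusedVariables false

lemma chord_arith (p q nw ne ne' i1 i2 i3 : ℝ) (hp : 0 < p) (hq : 0 < q) (hw : 0 < nw)
    (hne : ne ≤ nw/4 * p) (hne' : ne' ≤ nw/4 * q)
    (hene : 0 ≤ ne) (hene' : 0 ≤ ne')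
    (cs1 : |i1| ≤ nw * ne') (cs2 : |i2| ≤ ne * nw) (cs3 : |i3| ≤ ne * ne') :
    -(p*q) * (nw*nw) - p * i1 + q * i2 + i3 < 0 := by
  have h1 : |p * i1| ≤ p * (nw * (nw/4*q)) := by
    rw [abs_mul, abs_of_pos hp]
    exact mul_le_mul_of_nonneg_left (cs1.trans (by nlinarith)) hp.le
  have h2 : |q * i2| ≤ q * ((nw/4*p) * nw) := by
    rw [abs_mul, abs_of_pos hq]
    exact mul_le_mul_of_nonneg_left (cs2.trans (by nlinarith)) hq.le
  have h3 : |i3| ≤ (nw/4*p) * (nw/4*q) :=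
    cs3.trans (mul_le_mul hne hne' hene' (by positivity))
  have := abs_le.1 h1; have := abs_le.1 h2; have := abs_le.1 h3
  nlinarith [mul_pos (mul_pos hp hq) (mul_pos hw hw)]

lemma inner_chord_neg
    (g : ℝ → Plane) (c d t₁ : ℝ) (hg : ContDiffOn ℝ 1 g (Ioo c d))
    (ht₁ : t₁ ∈ Ioo c d) (hw : deriv g t₁ ≠ 0) :
    ∃ δ > 0, ∀ t ∈ Ioo (t₁ - δ) t₁, ∀ t' ∈ Ioo t₁ (t₁ + δ),
      ⟪g t - g t₁, g t' - g t₁⟫ < 0 := by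
  set w := deriv g t₁ with hwdef
  have hnw : 0 < ‖w‖ := norm_pos_iff.2 hw
  set ε : ℝ := ‖w‖ / 4 with hε
  have hεpos : 0 < ε := by positivity
  have hcont : ContinuousOn (deriv g) (Ioo c d) :=
    hg.continuousOn_deriv_of_isOpen isOpen_Ioo le_rfl
  have hca : ContinuousAt (deriv g) t₁ :=
    hcont.continuousAt (isOpen_Ioo.mem_nhds ht₁)
  have h1 : ∀ᶠ x in 𝓝 t₁, ‖deriv g x - w‖ ≤ ε ∧ x ∈ Ioo c d := by
    filter_upwards [hca.eventually (Metric.ball_mem_nhds w hεpos),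
      isOpen_Ioo.mem_nhds ht₁] with x hx hx2
    refine ⟨?_, hx2⟩
    have : dist (deriv g x) w < ε := hx
    rw [dist_eq_norm] at this; linarith
  obtain ⟨δ, hδpos, hδ⟩ := Metric.eventually_nhds_iff.1 h1
  refine ⟨δ, hδpos, ?_⟩
  -- the MVT estimate on s := Ioo (t₁ - δ) (t₁ + δ)
  set s : Set ℝ := Ioo (t₁ - δ) (t₁ + δ) with hs
  have hsub : s ⊆ Ioo c d := by
    intro x hx
    have : dist x t₁ < δ := by
      rw [Real.dist_eq, abs_lt]; constructor <;> [linarith [hx.1]; linarith [hx.2]]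
    exact (hδ this).2
  have hbound : ∀ x ∈ s, ‖deriv g x - w‖ ≤ ε := by
    intro x hx
    have : dist x t₁ < δ := by
      rw [Real.dist_eq, abs_lt]; constructor <;> [linarith [hx.1]; linarith [hx.2]]
    exact (hδ this).1
  have hder : ∀ x ∈ s, HasDerivWithinAt (fun t => g t - t • w) (deriv g x - w) s x := by
    intro x hx
    have hdx : HasDerivAt g (deriv g x) x :=
      ((hg.differentiableOn one_ne_zero).differentiableAt
        (isOpen_Ioo.mem_nhds (hsub hx))).hasDerivAt
    exact (hdx.sub ((hasDerivAt_id x).smul_const w)).hasDerivWithinAt.congr_deriv (by simp)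
  have hmvt : ∀ x ∈ s, ∀ y ∈ s,
      ‖(g y - y • w) - (g x - x • w)‖ ≤ ε * ‖y - x‖ := fun x hx y hy =>
    Convex.norm_image_sub_le_of_norm_hasDerivWithin_le hder hbound (convex_Ioo _ _) hx hy
  have ht₁s : t₁ ∈ s := by constructor <;> [linarith; linarith]
  intro t ht t' ht'
  have hts : t ∈ s := ⟨ht.1, by linarith [ht.2]⟩
  have ht's : t' ∈ s := ⟨by linarith [ht'.1], ht'.2⟩
  set p : ℝ := t₁ - t with hp
  set q : ℝ := t' - t₁ with hq
  have hppos : 0 < p := by simp [hp]; linarith [ht.2]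
  have hqpos : 0 < q := by simp [hq]; linarith [ht'.1]
  set e : Plane := g t - g t₁ + p • w with he
  set e' : Plane := g t' - g t₁ - q • w with he'
  have hne : ‖e‖ ≤ ε * p := by
    have := hmvt t₁ ht₁s t hts
    have h2 : (g t - t • w) - (g t₁ - t₁ • w) = e := by
      rw [he]; module
    rw [h2] at this
    have : ‖e‖ ≤ ε * |t - t₁| := by rwa [Real.norm_eq_abs] at this
    rwa [abs_of_nonpos (by linarith [ht.2]), show -(t - t₁) = p by ring] at this
  have hne' : ‖e'‖ ≤ ε * q := by
    have := hmvt t₁ ht₁s t' ht's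
    have h2 : (g t' - t' • w) - (g t₁ - t₁ • w) = e' := by
      rw [he']; module
    rw [h2] at this
    have : ‖e'‖ ≤ ε * |t' - t₁| := by rwa [Real.norm_eq_abs] at this
    rwa [abs_of_nonneg (by linarith [ht'.1])] at this
  have hexp : ⟪g t - g t₁, g t' - g t₁⟫
      = -(p * q) * ⟪w, w⟫ - p * ⟪w, e'⟫ + q * ⟪e, w⟫ + ⟪e, e'⟫ := by
    have h3 : g t - g t₁ = -(p • w) + e := by rw [he]; module
    have h4 : g t' - g t₁ = q • w + e' := by rw [he']; module
    rw [h3, h4]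
    simp only [inner_add_add_self, inner_add_left, inner_add_right, inner_neg_left,
      inner_neg_right, real_inner_smul_left, real_inner_smul_right, inner_sub_left]
    ring
  have hww : ⟪w, w⟫ = ‖w‖ * ‖w‖ := real_inner_self_eq_norm_mul_norm w
  have cs1 : |⟪w, e'⟫| ≤ ‖w‖ * ‖e'‖ := abs_real_inner_le_norm w e'
  have cs2 : |⟪e, w⟫| ≤ ‖e‖ * ‖w‖ := abs_real_inner_le_norm e w
  have cs3 : |⟪e, e'⟫| ≤ ‖e‖ * ‖e'‖ := abs_real_inner_le_norm e e'
  have hene : 0 ≤ ‖e‖ := norm_nonneg _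
  have hene' : 0 ≤ ‖e'‖ := norm_nonneg _
  rw [hexp, hww]
  have := chord_arith p q (‖w‖) (‖e‖) (‖e'‖) ⟪w,e'⟫ ⟪e,w⟫ ⟪e,e'⟫ hppos hqpos hnw
    (by rw [hε] at hne; linarith) (by rw [hε] at hne'; linarith)
    (norm_nonneg _) (norm_nonneg _) cs1 cs2 cs3
  linarith

lemma Plane.inner_eq (x y : Plane) : ⟪x, y⟫ = x 0 * y 0 + x 1 * y 1 := by
  simp [PiLp.inner_apply, Fin.sum_univ_two]; ring
lemma Jrot_add (x y : Plane) : Jrot (x + y) = Jrot x + Jrot y := by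
  ext i; fin_cases i <;> (simp [Jrot]; try ring)
lemma Jrot_smul (c : ℝ) (x : Plane) : Jrot (c • x) = c • Jrot x := by
  ext i; fin_cases i <;> simp [Jrot]
def JL : Plane →L[ℝ] Plane :=
  LinearMap.toContinuousLinearMap
    { toFun := Jrot, map_add' := Jrot_add, map_smul' := Jrot_smul }
lemma JL_apply (x : Plane) : JL x = Jrot x := rfl
lemma Jrot_Jrot (x : Plane) : Jrot (Jrot x) = -x := by
  ext i; fin_cases i <;> simp [Jrot]
lemma Plane.decomp (x z : Plane) (hx : x 0 * x 0 + x 1 * x 1 = 1) :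
    z = ⟪z, x⟫ • x + ⟪z, Jrot x⟫ • Jrot x := by
  ext i; fin_cases i
  · simp [Plane.inner_eq, Jrot]; linear_combination (-(z 0) : ℝ) * hx
  · simp [Plane.inner_eq, Jrot]; linear_combination (-(z 1) : ℝ) * hx

section Geom
variable (a b : ℝ) (γ ν : ℝ → Plane) (κ : ℝ → ℝ)
  (hγ : ContDiffOn ℝ 2 γ (Ioo a b))
  (harc : ∀ s ∈ Ioo a b, ‖deriv γ s‖ = 1)
  (hν : ∀ s, ν s = Jrot (deriv γ s))
  (hκdef : ∀ s, κ s = ⟪deriv (deriv γ) s, ν s⟫)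

include hγ harc hν hκdef

lemma gammaSecond (s : ℝ) (hs : s ∈ Ioo a b) :
    HasDerivAt (deriv γ) (κ s • ν s) s := by
  have hT1 : ContDiffOn ℝ 1 (deriv γ) (Ioo a b) :=
    hγ.deriv_of_isOpen isOpen_Ioo (by norm_num)
  have hTd : HasDerivAt (deriv γ) (deriv (deriv γ) s) s :=
    ((hT1.differentiableOn one_ne_zero).differentiableAt
      (isOpen_Ioo.mem_nhds hs)).hasDerivAt
  -- ⟪γ'', γ'⟫ = 0
  have hq : ∀ x ∈ Ioo a b, ⟪deriv γ x, deriv γ x⟫ = (1:ℝ) := by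
    intro x hx
    rw [real_inner_self_eq_norm_mul_norm, harc x hx]; norm_num
  have hq1 : HasDerivAt (fun x => ⟪deriv γ x, deriv γ x⟫)
      (⟪deriv γ s, deriv (deriv γ) s⟫ + ⟪deriv (deriv γ) s, deriv γ s⟫) s :=
    hTd.inner ℝ hTd
  have hq2 : HasDerivAt (fun x => ⟪deriv γ x, deriv γ x⟫) 0 s := by
    have : (fun x => ⟪deriv γ x, deriv γ x⟫) =ᶠ[𝓝 s] fun _ => (1:ℝ) := by
      filter_upwards [isOpen_Ioo.mem_nhds hs] with x hx using hq x hx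
    exact (hasDerivAt_const s (1:ℝ)).congr_of_eventuallyEq this
  have horth : ⟪deriv (deriv γ) s, deriv γ s⟫ = 0 := by
    have := hq1.unique hq2
    rw [real_inner_comm (deriv γ s) (deriv (deriv γ) s)] at this
    rw [real_inner_comm]
    linarith
  have hxx : deriv γ s 0 * deriv γ s 0 + deriv γ s 1 * deriv γ s 1 = 1 := by
    have := hq s hs; rwa [Plane.inner_eq] at this
  have hdec := Plane.decomp (deriv γ s) (deriv (deriv γ) s) hxx
  rw [horth, zero_smul, zero_add, ← hν, ← hκdef] at hdec
  rw [hdec] at hTd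
  exact hTd

lemma nuDeriv (s : ℝ) (hs : s ∈ Ioo a b) :
    HasDerivAt ν (-(κ s) • deriv γ s) s := by
  have h1 : HasDerivAt (fun x => JL (deriv γ x)) (JL (κ s • ν s)) s :=
    (JL.hasFDerivAt.comp_hasDerivAt s (gammaSecond a b γ ν κ hγ harc hν hκdef s hs))
  have h2 : (fun x => JL (deriv γ x)) = ν := by
    funext x; rw [JL_apply, ← hν]
  have h3 : JL (κ s • ν s) = -(κ s) • deriv γ s := by
    rw [JL_apply, Jrot_smul, hν, Jrot_Jrot]
    module
  rwa [h2, h3] at h1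

lemma EDeriv (r : ℝ) (s : ℝ) (hs : s ∈ Ioo a b) :
    HasDerivAt (fun τ => γ τ + r • ν τ) ((1 - r * κ s) • deriv γ s) s := by
  have h1 : HasDerivAt γ (deriv γ s) s :=
    ((hγ.differentiableOn (by norm_num)).differentiableAt
      (isOpen_Ioo.mem_nhds hs)).hasDerivAt
  have h2 := (nuDeriv a b γ ν κ hγ harc hν hκdef s hs).const_smul r
  have := h1.add h2
  have e : (1 - r * κ s) • deriv γ s = deriv γ s + r • (-(κ s) • deriv γ s) := by module
  rw [e]; exact this

lemma kappaCont : ContinuousOn κ (Ioo a b) := by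
  have hT1 : ContDiffOn ℝ 1 (deriv γ) (Ioo a b) :=
    hγ.deriv_of_isOpen isOpen_Ioo (by norm_num)
  have hT2 : ContinuousOn (deriv (deriv γ)) (Ioo a b) :=
    hT1.continuousOn_deriv_of_isOpen isOpen_Ioo le_rfl
  have hνc : ContinuousOn ν (Ioo a b) := by
    have : ContinuousOn (fun x => JL (deriv γ x)) (Ioo a b) :=
      JL.continuous.comp_continuousOn (hT1.continuousOn)
    refine this.congr ?_
    intro x _; exact hν x
  have : ContinuousOn (fun s => ⟪deriv (deriv γ) s, ν s⟫) (Ioo a b) :=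
    hT2.inner hνc
  refine this.congr ?_
  intro x _; rw [hκdef]

lemma nuCont : ContinuousOn ν (Ioo a b) := by
  have hT1 : ContDiffOn ℝ 1 (deriv γ) (Ioo a b) :=
    hγ.deriv_of_isOpen isOpen_Ioo (by norm_num)
  have : ContinuousOn (fun x => JL (deriv γ x)) (Ioo a b) :=
    JL.continuous.comp_continuousOn (hT1.continuousOn)
  refine this.congr ?_
  intro x _; exact hν x

end Geom

section Side
variable (a b : ℝ) (γ ν ev : ℝ → Plane) (κ R : ℝ → ℝ)
  (hγ : ContDiffOn ℝ 2 γ (Ioo a b))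
  (harc : ∀ s ∈ Ioo a b, ‖deriv γ s‖ = 1)
  (hν : ∀ s, ν s = Jrot (deriv γ s))
  (hκdef : ∀ s, κ s = ⟪deriv (deriv γ) s, ν s⟫)
  (hκ : ∀ s ∈ Ioo a b, κ s ≠ 0)
  (hR : ∀ s, R s = (κ s)⁻¹)
  (hev : ∀ s, ev s = γ s + R s • ν s)

include hγ harc hν hκdef hκ hR hev

lemma side_point (s₁ : ℝ) (K r : ℝ) (hrpos : 0 < r)
    (hwin : Icc (s₁ - r) (s₁ + r) ⊆ Ioo a b)
    (hκbd : ∀ τ ∈ Icc (s₁ - r) (s₁ + r), |κ τ| ≤ K)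
    (hνbd : ∀ τ ∈ Icc (s₁ - r) (s₁ + r), ‖ν τ - ν s₁‖ ≤ 1/8)
    (hKr : K * r ≤ 1/8)
    (x : ℝ) (hx : x ∈ Icc (s₁ - r) (s₁ + r)) (hxne : x ≠ s₁) :
    ∃ p ∈ uIcc s₁ x, p ≠ s₁ ∧
      (ev p = ev s₁ ∨ (R p ≠ R s₁ ∧
        ‖ev p - ev s₁ - (R p - R s₁) • ν s₁‖ ≤ (1/4) * |R p - R s₁|)) := by
  have hs₁w : s₁ ∈ Icc (s₁ - r) (s₁ + r) := by
    constructor <;> linarith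
  have hUsub : uIcc s₁ x ⊆ Icc (s₁ - r) (s₁ + r) :=
    (ordConnected_Icc).uIcc_subset hs₁w hx
  set E : ℝ → Plane := fun τ => γ τ + R s₁ • ν τ with hE
  have hfac : ∀ τ ∈ Icc (s₁ - r) (s₁ + r),
      (1 - R s₁ * κ τ) = κ τ * (R τ - R s₁) := by
    intro τ hτ
    have h1 : κ τ ≠ 0 := hκ τ (hwin hτ)
    rw [hR τ, hR s₁]
    field_simp
  have hEd : ∀ τ ∈ uIcc s₁ x,
      HasDerivWithinAt E ((κ τ * (R τ - R s₁)) • deriv γ τ) (uIcc s₁ x) τ := by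
    intro τ hτ
    have := (EDeriv a b γ ν κ hγ harc hν hκdef (R s₁) τ (hwin (hUsub hτ))).hasDerivWithinAt
      (s := uIcc s₁ x)
    rwa [hfac τ (hUsub hτ)] at this
  have hevE : ∀ τ, ev τ - ev s₁ = (E τ - E s₁) + (R τ - R s₁) • ν τ - (R s₁ - R s₁) • ν s₁ := by
    intro τ
    rw [hev τ, hev s₁, hE]
    simp only []
    module
  by_cases hz : ∀ τ ∈ uIcc s₁ x, R τ = R s₁
  · -- R is constant on the interval : ev x = ev s₁
    refine ⟨x, right_mem_uIcc, hxne, Or.inl ?_⟩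
    have hbd0 : ∀ τ ∈ uIcc s₁ x, ‖(κ τ * (R τ - R s₁)) • deriv γ τ‖ ≤ 0 := by
      intro τ hτ
      rw [hz τ hτ]
      simp
    have := Convex.norm_image_sub_le_of_norm_hasDerivWithin_le hEd hbd0
      (convex_uIcc _ _) left_mem_uIcc right_mem_uIcc
    have hEeq : E x = E s₁ := by
      have h0 : ‖E x - E s₁‖ ≤ 0 := by simpa using this
      have := norm_nonneg (E x - E s₁)
      have : ‖E x - E s₁‖ = 0 := le_antisymm h0 this
      rwa [norm_eq_zero, sub_eq_zero] at this
    have := hevE x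
    rw [hz x right_mem_uIcc, hEeq] at this
    simp only [sub_self, zero_smul, sub_zero, add_zero] at this
    rwa [sub_eq_zero] at this
  · push_neg at hz
    obtain ⟨q, hqmem, hq⟩ := hz
    -- maximize |R · - R s₁| on uIcc s₁ q
    have hqsub : uIcc s₁ q ⊆ uIcc s₁ x :=
      (ordConnected_uIcc).uIcc_subset left_mem_uIcc hqmem
    have hRcont : ContinuousOn (fun τ => |R τ - R s₁|) (uIcc s₁ q) := by
      have hκc : ContinuousOn κ (Ioo a b) := kappaCont a b γ ν κ hγ harc hν hκdef
      have hRc : ContinuousOn R (Ioo a b) := by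
        have : ContinuousOn (fun τ => (κ τ)⁻¹) (Ioo a b) := hκc.inv₀ hκ
        exact this.congr fun τ _ => hR τ
      exact ((hRc.mono (fun τ hτ => hwin (hUsub (hqsub hτ)))).sub continuousOn_const).abs
    obtain ⟨p, hpmem, hpmax⟩ := isCompact_uIcc.exists_isMaxOn
      ⟨s₁, left_mem_uIcc⟩ hRcont
    have hpmax' : ∀ τ ∈ uIcc s₁ q, |R τ - R s₁| ≤ |R p - R s₁| := hpmax
    have hmp : R p ≠ R s₁ := by
      intro h
      have h2 := hpmax' q right_mem_uIcc
      rw [h, sub_self, abs_zero] at h2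
      have h3 : |R q - R s₁| = 0 := le_antisymm h2 (abs_nonneg _)
      rw [abs_eq_zero, sub_eq_zero] at h3
      exact hq h3
    have hpne : p ≠ s₁ := fun h => hmp (by rw [h])
    refine ⟨p, hqsub hpmem, hpne, Or.inr ⟨hmp, ?_⟩⟩
    have hKnn : 0 ≤ K := le_trans (abs_nonneg _) (hκbd s₁ hs₁w)
    have hpsub : uIcc s₁ p ⊆ uIcc s₁ q :=
      ordConnected_uIcc.uIcc_subset left_mem_uIcc hpmem
    have hpsubx : uIcc s₁ p ⊆ uIcc s₁ x := fun τ hτ => hqsub (hpsub hτ)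
    have hEd' : ∀ τ ∈ uIcc s₁ p,
        HasDerivWithinAt E ((κ τ * (R τ - R s₁)) • deriv γ τ) (uIcc s₁ p) τ :=
      fun τ hτ => (hEd τ (hpsubx hτ)).mono hpsubx
    have hbd : ∀ τ ∈ uIcc s₁ p,
        ‖(κ τ * (R τ - R s₁)) • deriv γ τ‖ ≤ K * |R p - R s₁| := by
      intro τ hτ
      have hτw : τ ∈ Icc (s₁ - r) (s₁ + r) := hUsub (hpsubx hτ)
      rw [norm_smul, Real.norm_eq_abs, harc τ (hwin hτw), mul_one, abs_mul]
      exact mul_le_mul (hκbd τ hτw) (hpmax' τ (hpsub hτ)) (abs_nonneg _) hKnn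
    have hmvt := Convex.norm_image_sub_le_of_norm_hasDerivWithin_le hEd' hbd
      (convex_uIcc _ _) left_mem_uIcc right_mem_uIcc
    have hpw : p ∈ Icc (s₁ - r) (s₁ + r) := hUsub (hpsubx right_mem_uIcc)
    have hpr : ‖p - s₁‖ ≤ r := by
      rw [Real.norm_eq_abs, abs_le]
      constructor <;> [linarith [hpw.1]; linarith [hpw.2]]
    have hEbd : ‖E p - E s₁‖ ≤ (1/8) * |R p - R s₁| := by
      refine hmvt.trans ?_
      calc K * |R p - R s₁| * ‖p - s₁‖ ≤ K * |R p - R s₁| * r := by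
            exact mul_le_mul_of_nonneg_left hpr (by positivity)
        _ = (K * r) * |R p - R s₁| := by ring
        _ ≤ (1/8) * |R p - R s₁| :=
            mul_le_mul_of_nonneg_right hKr (abs_nonneg _)
    have hid : ev p - ev s₁ - (R p - R s₁) • ν s₁
        = (E p - E s₁) + (R p - R s₁) • (ν p - ν s₁) := by
      rw [hev p, hev s₁, hE]
      simp only []
      module
    rw [hid]
    calc ‖(E p - E s₁) + (R p - R s₁) • (ν p - ν s₁)‖
        ≤ ‖E p - E s₁‖ + ‖(R p - R s₁) • (ν p - ν s₁)‖ := norm_add_le _ _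
      _ ≤ (1/8) * |R p - R s₁| + |R p - R s₁| * (1/8) := by
          refine add_le_add hEbd ?_
          rw [norm_smul, Real.norm_eq_abs]
          exact mul_le_mul_of_nonneg_left (hνbd p hpw) (abs_nonneg _)
      _ = (1/4) * |R p - R s₁| := by ring

end Side

lemma norm_Jrot (x : Plane) : ‖Jrot x‖ = ‖x‖ := by
  have h1 : ⟪Jrot x, Jrot x⟫ = ⟪x, x⟫ := by
    rw [Plane.inner_eq, Plane.inner_eq]
    simp only [Jrot, WithLp.ofLp_toLp, Matrix.cons_val_zero, Matrix.cons_val_one]; ring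
  have := congrArg Real.sqrt h1
  rwa [real_inner_self_eq_norm_sq, real_inner_self_eq_norm_sq,
    Real.sqrt_sq (norm_nonneg _), Real.sqrt_sq (norm_nonneg _)] at this

lemma final_arith (mL mR nL nR i1 i2 i3 : ℝ) (hmm : 0 ≤ mL * mR)
    (hnL0 : 0 ≤ nL) (hnR0 : 0 ≤ nR)
    (hnL : nL ≤ 1/4 * |mL|) (hnR : nR ≤ 1/4 * |mR|)
    (c1 : |i1| ≤ nR) (c2 : |i2| ≤ nL) (c3 : |i3| ≤ nL * nR) :
    0 ≤ mL * mR + mL * i1 + mR * i2 + i3 := by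
  have habs : mL * mR = |mL| * |mR| := by
    rw [← abs_mul, abs_of_nonneg hmm]
  have h1 : |mL * i1| ≤ |mL| * (1/4 * |mR|) := by
    rw [abs_mul]; exact mul_le_mul_of_nonneg_left (c1.trans hnR) (abs_nonneg _)
  have h2 : |mR * i2| ≤ |mR| * (1/4 * |mL|) := by
    rw [abs_mul]; exact mul_le_mul_of_nonneg_left (c2.trans hnL) (abs_nonneg _)
  have h3 : |i3| ≤ (1/4 * |mL|) * (1/4 * |mR|) :=
    c3.trans (mul_le_mul hnL hnR hnR0 (by positivity))
  nlinarith [abs_le.1 h1, abs_le.1 h2, abs_le.1 h3,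
    mul_nonneg (abs_nonneg mL) (abs_nonneg mR)]

/-- if `R` has a local extremum at `s₁` then the evolute is not
`C¹`-regular on any neighborhood of `s₁`. -/
theorem evolute_not_C1_regular_of_localExtr
    (a b : ℝ) (hab : a < b) (γ ν ev : ℝ → Plane) (κ R : ℝ → ℝ)
    (hγ : ContDiffOn ℝ 2 γ (Ioo a b))
    (harc : ∀ s ∈ Ioo a b, ‖deriv γ s‖ = 1)
    (hν : ∀ s, ν s = Jrot (deriv γ s))
    (hκdef : ∀ s, κ s = ⟪deriv (deriv γ) s, ν s⟫)
    (hκ : ∀ s ∈ Ioo a b, κ s ≠ 0)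
    (hR : ∀ s, R s = (κ s)⁻¹)
    (hev : ∀ s, ev s = γ s + R s • ν s)
    (s₁ : ℝ) (hs₁ : s₁ ∈ Ioo a b)
    (hext : IsLocalExtrOn R (Ioo a b) s₁) :
    ∀ u v : ℝ, u < s₁ → s₁ < v → Ioo u v ⊆ Ioo a b →
      ¬ CkAlphaRegularOn 1 0 ev u v := by
  intro u v huv hsv hsub hreg
  obtain ⟨c, d, hcd, φ, hφc, hφbij, ⟨hg1, -⟩, hg'⟩ := hreg
  have hs₁uv : s₁ ∈ Ioo u v := ⟨huv, hsv⟩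
  obtain ⟨t₁, ht₁mem, ht₁⟩ := hφbij.surjOn hs₁uv
  have hw : deriv (ev ∘ φ) t₁ ≠ 0 := hg' t₁ ht₁mem
  obtain ⟨δ, hδpos, hδ⟩ := inner_chord_neg (ev ∘ φ) c d t₁ (by exact_mod_cast hg1) ht₁mem hw
  -- Step 1: transfer the chord condition to the `s` variable
  have hKEY : ∃ δ' > 0, ∀ sL ∈ Ioo (s₁ - δ') s₁, ∀ sR ∈ Ioo s₁ (s₁ + δ'),
      ⟪ev sL - ev s₁, ev sR - ev s₁⟫ < 0 := by
    obtain ⟨t₀, ht₀⟩ := exists_between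
      (show max c (t₁ - δ) < t₁ from max_lt ht₁mem.1 (by linarith))
    obtain ⟨t₀', ht₀'⟩ := exists_between
      (show t₁ < min d (t₁ + δ) from lt_min ht₁mem.2 (by linarith))
    have ht₀mem : t₀ ∈ Ioo c d :=
      ⟨(le_max_left _ _).trans_lt ht₀.1, ht₀.2.trans ht₁mem.2⟩
    have ht₀'mem : t₀' ∈ Ioo c d :=
      ⟨ht₁mem.1.trans ht₀'.1, ht₀'.2.trans_le (min_le_left _ _)⟩
    have ht₀δ : t₁ - δ < t₀ := (le_max_right c (t₁ - δ)).trans_lt ht₀.1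
    have ht₀'δ : t₀' < t₁ + δ := ht₀'.2.trans_le (min_le_right d (t₁ + δ))
    rcases hφc.strictMonoOn_of_injOn_Ioo hcd hφbij.injOn with hmono | hanti
    · -- monotone case
      have hl : φ t₀ < s₁ := by rw [← ht₁]; exact hmono ht₀mem ht₁mem ht₀.2
      have hr : s₁ < φ t₀' := by rw [← ht₁]; exact hmono ht₁mem ht₀'mem ht₀'.1
      refine ⟨min (min (s₁ - φ t₀) (φ t₀' - s₁)) (min (s₁ - u) (v - s₁)),
        lt_min (lt_min (by linarith) (by linarith)) (lt_min (by linarith) (by linarith)),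
        fun sL hsL sR hsR => ?_⟩
      set δ' := min (min (s₁ - φ t₀) (φ t₀' - s₁)) (min (s₁ - u) (v - s₁)) with hδ'
      have hδ'1 : δ' ≤ s₁ - φ t₀ := (min_le_left _ _).trans (min_le_left _ _)
      have hδ'2 : δ' ≤ φ t₀' - s₁ := (min_le_left _ _).trans (min_le_right _ _)
      have hδ'3 : δ' ≤ s₁ - u := (min_le_right _ _).trans (min_le_left _ _)
      have hδ'4 : δ' ≤ v - s₁ := (min_le_right _ _).trans (min_le_right _ _)
      obtain ⟨t, htmem, hts⟩ := hφbij.surjOn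
        (⟨by linarith [hsL.1], by linarith [hsL.2]⟩ : sL ∈ Ioo u v)
      obtain ⟨t', ht'mem, ht's⟩ := hφbij.surjOn
        (⟨by linarith [hsR.1], by linarith [hsR.2]⟩ : sR ∈ Ioo u v)
      have h1 : t < t₁ := (hmono.lt_iff_lt htmem ht₁mem).1
        (by rw [hts, ht₁]; exact hsL.2)
      have h2 : t₀ < t := (hmono.lt_iff_lt ht₀mem htmem).1
        (by rw [hts]; linarith [hsL.1])
      have h3 : t₁ < t' := (hmono.lt_iff_lt ht₁mem ht'mem).1
        (by rw [ht's, ht₁]; exact hsR.1)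
      have h4 : t' < t₀' := (hmono.lt_iff_lt ht'mem ht₀'mem).1
        (by rw [ht's]; linarith [hsR.2])
      have := hδ t ⟨by linarith, h1⟩ t' ⟨h3, by linarith⟩
      simpa only [Function.comp_apply, hts, ht's, ht₁] using this
    · -- antitone case
      have hl : s₁ < φ t₀ := by rw [← ht₁]; exact hanti ht₀mem ht₁mem ht₀.2
      have hr : φ t₀' < s₁ := by rw [← ht₁]; exact hanti ht₁mem ht₀'mem ht₀'.1
      refine ⟨min (min (φ t₀ - s₁) (s₁ - φ t₀')) (min (s₁ - u) (v - s₁)),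
        lt_min (lt_min (by linarith) (by linarith)) (lt_min (by linarith) (by linarith)),
        fun sL hsL sR hsR => ?_⟩
      set δ' := min (min (φ t₀ - s₁) (s₁ - φ t₀')) (min (s₁ - u) (v - s₁)) with hδ'
      have hδ'1 : δ' ≤ φ t₀ - s₁ := (min_le_left _ _).trans (min_le_left _ _)
      have hδ'2 : δ' ≤ s₁ - φ t₀' := (min_le_left _ _).trans (min_le_right _ _)
      have hδ'3 : δ' ≤ s₁ - u := (min_le_right _ _).trans (min_le_left _ _)
      have hδ'4 : δ' ≤ v - s₁ := (min_le_right _ _).trans (min_le_right _ _)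
      obtain ⟨t', ht'mem, ht's⟩ := hφbij.surjOn
        (⟨by linarith [hsL.1], by linarith [hsL.2]⟩ : sL ∈ Ioo u v)
      obtain ⟨t, htmem, hts⟩ := hφbij.surjOn
        (⟨by linarith [hsR.1], by linarith [hsR.2]⟩ : sR ∈ Ioo u v)
      have h1 : t₁ < t' := (hanti.lt_iff_gt ht'mem ht₁mem).1
        (by rw [ht's, ht₁]; exact hsL.2)
      have h2 : t' < t₀' := (hanti.lt_iff_gt ht₀'mem ht'mem).1
        (by rw [ht's]; linarith [hsL.1])
      have h3 : t < t₁ := (hanti.lt_iff_gt ht₁mem htmem).1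
        (by rw [hts, ht₁]; exact hsR.1)
      have h4 : t₀ < t := (hanti.lt_iff_gt htmem ht₀mem).1
        (by rw [hts]; linarith [hsR.2])
      have := hδ t ⟨by linarith, h3⟩ t' ⟨h1, by linarith⟩
      rw [real_inner_comm]
      simpa only [Function.comp_apply, hts, ht's, ht₁] using this
  obtain ⟨δ', hδ'pos, hKEY⟩ := hKEY
  -- Step 2: sign data from the extremum
  obtain ⟨P, hPev, hPsgn⟩ : ∃ P : ℝ → Prop, (∀ᶠ x in 𝓝 s₁, x ∈ Ioo a b → P x) ∧
      (∀ x y, P x → P y → 0 ≤ (R x - R s₁) * (R y - R s₁)) := by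
    rcases hext with h | h
    · exact ⟨fun x => R s₁ ≤ R x,
        eventually_nhdsWithin_iff.mp (h : ∀ᶠ x in 𝓝[Ioo a b] s₁, R s₁ ≤ R x),
        fun x y hx hy => mul_nonneg (by linarith) (by linarith)⟩
    · refine ⟨fun x => R x ≤ R s₁,
        eventually_nhdsWithin_iff.mp (h : ∀ᶠ x in 𝓝[Ioo a b] s₁, R x ≤ R s₁),
        fun x y hx hy => ?_⟩
      nlinarith
  -- Step 3: window construction
  set K := |κ s₁| + 1 with hK
  have hKpos : 0 < K := by positivity
  have e2 : ∀ᶠ x in 𝓝 s₁, |κ x| ≤ K := by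
    have hκc : ContinuousAt κ s₁ :=
      (kappaCont a b γ ν κ hγ harc hν hκdef).continuousAt (isOpen_Ioo.mem_nhds hs₁)
    filter_upwards [hκc (Metric.ball_mem_nhds (κ s₁) one_pos)] with x hx
    have h5 : |κ x - κ s₁| < 1 := by
      simpa [Real.dist_eq] using hx
    calc |κ x| = |κ s₁ + (κ x - κ s₁)| := by norm_num
      _ ≤ |κ s₁| + |κ x - κ s₁| := abs_add_le _ _
      _ ≤ K := by rw [hK]; linarith
  have e3 : ∀ᶠ x in 𝓝 s₁, ‖ν x - ν s₁‖ ≤ 1/8 := by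
    have hνc : ContinuousAt ν s₁ :=
      (nuCont a b γ ν κ hγ harc hν hκdef).continuousAt (isOpen_Ioo.mem_nhds hs₁)
    filter_upwards [hνc (Metric.ball_mem_nhds (ν s₁) (by norm_num : (0:ℝ) < 1/8))] with x hx
    have h5 : dist (ν x) (ν s₁) < 1/8 := by simpa using hx
    rw [dist_eq_norm] at h5
    linarith
  have e1 : ∀ᶠ x in 𝓝 s₁, x ∈ Ioo u v := isOpen_Ioo.mem_nhds hs₁uv
  have eall : ∀ᶠ x in 𝓝 s₁,
      x ∈ Ioo u v ∧ |κ x| ≤ K ∧ ‖ν x - ν s₁‖ ≤ 1/8 ∧ (x ∈ Ioo a b → P x) := by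
    filter_upwards [e1, e2, e3, hPev] with x h1 h2 h3 h4
    exact ⟨h1, h2, h3, h4⟩
  obtain ⟨r₁, hr₁pos, hr₁⟩ := Metric.eventually_nhds_iff.1 eall
  set r := min (r₁/2) (1/(8*K)) with hrdef
  have hrpos : 0 < r := lt_min (by linarith) (by positivity)
  have hKr : K * r ≤ 1/8 := by
    have h1 : r ≤ 1/(8*K) := min_le_right _ _
    calc K * r ≤ K * (1/(8*K)) := mul_le_mul_of_nonneg_left h1 hKpos.le
      _ = 1/8 := by field_simp
  have hWr₁ : ∀ τ ∈ Icc (s₁ - r) (s₁ + r), dist τ s₁ < r₁ := by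
    intro τ hτ
    rw [Real.dist_eq, abs_lt]
    have : r ≤ r₁/2 := min_le_left _ _
    constructor <;> [linarith [hτ.1]; linarith [hτ.2]]
  have hWuv : Icc (s₁ - r) (s₁ + r) ⊆ Ioo u v := fun τ hτ => (hr₁ (hWr₁ τ hτ)).1
  have hWab : Icc (s₁ - r) (s₁ + r) ⊆ Ioo a b := fun τ hτ => hsub (hWuv hτ)
  have hκbd : ∀ τ ∈ Icc (s₁ - r) (s₁ + r), |κ τ| ≤ K := fun τ hτ => (hr₁ (hWr₁ τ hτ)).2.1
  have hνbd : ∀ τ ∈ Icc (s₁ - r) (s₁ + r), ‖ν τ - ν s₁‖ ≤ 1/8 :=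
    fun τ hτ => (hr₁ (hWr₁ τ hτ)).2.2.1
  have hsgnW : ∀ x ∈ Icc (s₁ - r) (s₁ + r), ∀ y ∈ Icc (s₁ - r) (s₁ + r),
      0 ≤ (R x - R s₁) * (R y - R s₁) := fun x hx y hy =>
    hPsgn x y ((hr₁ (hWr₁ x hx)).2.2.2 (hWab hx)) ((hr₁ (hWr₁ y hy)).2.2.2 (hWab hy))
  -- Step 4: pick the side points and contradict
  set ρ := min δ' r with hρdef
  have hρpos : 0 < ρ := lt_min hδ'pos hrpos
  have hρr : ρ ≤ r := min_le_right _ _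
  have hρδ : ρ ≤ δ' := min_le_left _ _
  have hxRW : s₁ + ρ/2 ∈ Icc (s₁ - r) (s₁ + r) := ⟨by linarith, by linarith⟩
  have hxLW : s₁ - ρ/2 ∈ Icc (s₁ - r) (s₁ + r) := ⟨by linarith, by linarith⟩
  obtain ⟨pR, hpRmem, hpRne, hpR⟩ := side_point a b γ ν ev κ R hγ harc hν hκdef hκ hR hev
    s₁ K r hrpos hWab hκbd hνbd hKr (s₁ + ρ/2) hxRW (by intro h; linarith [hρpos])
  obtain ⟨pL, hpLmem, hpLne, hpL⟩ := side_point a b γ ν ev κ R hγ harc hν hκdef hκ hR hev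
    s₁ K r hrpos hWab hκbd hνbd hKr (s₁ - ρ/2) hxLW (by intro h; linarith [hρpos])
  rw [uIcc_of_le (by linarith : s₁ ≤ s₁ + ρ/2)] at hpRmem
  rw [uIcc_of_ge (by linarith : s₁ - ρ/2 ≤ s₁)] at hpLmem
  have hpRIoo : pR ∈ Ioo s₁ (s₁ + δ') :=
    ⟨lt_of_le_of_ne hpRmem.1 (Ne.symm hpRne), by linarith [hpRmem.2]⟩
  have hpLIoo : pL ∈ Ioo (s₁ - δ') s₁ :=
    ⟨by linarith [hpLmem.1], lt_of_le_of_ne hpLmem.2 hpLne⟩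
  have hlt := hKEY pL hpLIoo pR hpRIoo
  rcases hpR with h0 | ⟨hmR, hbdR⟩
  · rw [h0, sub_self, inner_zero_right] at hlt
    exact lt_irrefl _ hlt
  rcases hpL with h0 | ⟨hmL, hbdL⟩
  · rw [h0, sub_self, inner_zero_left] at hlt
    exact lt_irrefl _ hlt
  -- both sides are genuine: compute
  have hpRW : pR ∈ Icc (s₁ - r) (s₁ + r) := ⟨by linarith [hpRmem.1], by linarith [hpRmem.2]⟩
  have hpLW : pL ∈ Icc (s₁ - r) (s₁ + r) := ⟨by linarith [hpLmem.1], by linarith [hpLmem.2]⟩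
  have hν1 : ⟪ν s₁, ν s₁⟫ = (1:ℝ) := by
    rw [real_inner_self_eq_norm_mul_norm, hν s₁, norm_Jrot, harc s₁ hs₁]
    norm_num
  set mR := R pR - R s₁ with hmRdef
  set mL := R pL - R s₁ with hmLdef
  set eR : Plane := ev pR - ev s₁ - mR • ν s₁ with heR
  set eL : Plane := ev pL - ev s₁ - mL • ν s₁ with heL
  have hdR : ev pR - ev s₁ = mR • ν s₁ + eR := by rw [heR]; module
  have hdL : ev pL - ev s₁ = mL • ν s₁ + eL := by rw [heL]; module
  have hexp : ⟪ev pL - ev s₁, ev pR - ev s₁⟫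
      = mL * mR + mL * ⟪ν s₁, eR⟫ + mR * ⟪eL, ν s₁⟫ + ⟪eL, eR⟫ := by
    rw [hdR, hdL]
    simp only [inner_add_left, inner_add_right, real_inner_smul_left,
      real_inner_smul_right, hν1]
    ring
  have hνnorm : ‖ν s₁‖ = 1 := by rw [hν s₁, norm_Jrot]; exact harc s₁ hs₁
  have c1 : |⟪ν s₁, eR⟫| ≤ ‖eR‖ := by
    have := abs_real_inner_le_norm (ν s₁) eR
    rwa [hνnorm, one_mul] at this
  have c2 : |⟪eL, ν s₁⟫| ≤ ‖eL‖ := by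
    have := abs_real_inner_le_norm eL (ν s₁)
    rwa [hνnorm, mul_one] at this
  have c3 : |⟪eL, eR⟫| ≤ ‖eL‖ * ‖eR‖ := abs_real_inner_le_norm _ _
  have hfin := final_arith mL mR (‖eL‖) (‖eR‖) ⟪ν s₁, eR⟫ ⟪eL, ν s₁⟫ ⟪eL, eR⟫
    (hsgnW pL hpLW pR hpRW) (norm_nonneg _) (norm_nonneg _)
    (by rw [heL]; exact hbdL.trans_eq (by rw [hmLdef]))
    (by rw [heR]; exact hbdR.trans_eq (by rw [hmRdef]))
    c1 c2 c3
  rw [hexp] at hlt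
  linarith
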